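/- arXiv:2005.14499 — 2 statements merged into one kernel-verified Lean document; each statement's English description precedes it below -/
import Mathlib

section
/- Let n, n_T, r be positive integers, τ ≠ 0 and β ≠ 0 real numbers, and M, M₁, N, K ∈ ℝ^{n×n} with M invertible and K symmetric (K = Kᵀ). Let Y₁ ∈ ℝ^{n×r}, Y₂ ∈ ℝ^{n_T×r}, Ŷ = Y₁Y₂ᵀ. Let C ∈ ℝ^{n_T×n_T} be the lower bidiagonal matrix with ones on the diagonal and −1 on the first subdiagonal, C̃ = (1/τ)C, and define the 2n_T × 2n_T block matrices C₁ = [[C̃ᵀ, 0], [0, C̃]], I₀ = [[0, I_{n_T}], [0, 0]], D = [[0, 0], [−(1/β)I_{n_T}, 0]]. Define A₁ = M⁻¹K, A₂ = M⁻¹M₁, A₃ = M⁻¹N M⁻¹Nᵀ, F₁ = M⁻¹M₁Y₁, and F₂ ∈ ℝ^{2n_T×r} whose first n_T rows are zero and whose last n_T rows equal Y₂. Then Y, Λ ∈ ℝ^{n×n_T} satisfy the two equations M⁻¹M₁Y + M⁻¹KᵀΛ + ΛC̃ − M⁻¹M₁Ŷ = 0 and M⁻¹KY + YC̃ᵀ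 − (1/β)M⁻¹NM⁻¹NᵀΛ = 0 if and only if the column-concatenated matrix X = [Y, Λ] ∈ ℝ^{n×2n_T} satisfies the generalized Sylvester equation A₁X + XC₁ + A₂XI₀ + A₃XD − F₁F₂ᵀ = 0. -/
open Matrix

lemma fc_add {m n₁ n₂ : Type*} (A B : Matrix m n₁ ℝ) (C D : Matrix m n₂ ℝ) :
    fromCols A C + fromCols B D = fromCols (A + B) (C + D) := by
  ext i (j | j) <;> simp [fromCols]

lemma fc_sub {m n₁ n₂ : Type*} (A B : Matrix m n₁ ℝ) (C D : Matrix m n₂ ℝ) :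
    fromCols A C - fromCols B D = fromCols (A - B) (C - D) := by
  ext i (j | j) <;> simp [fromCols]

lemma fc_zero {m n₁ n₂ : Type*} (A : Matrix m n₁ ℝ) (C : Matrix m n₂ ℝ) :
    fromCols A C = 0 ↔ A = 0 ∧ C = 0 := by
  constructor
  · intro h
    constructor <;> ext i j
    · exact congrFun (congrFun h i) (Sum.inl j)
    · exact congrFun (congrFun h i) (Sum.inr j)
  · rintro ⟨rfl, rfl⟩
    ext i (j | j) <;> simp [fromCols]

/-- Reformulation of the reduced KKT system (symmetric `K`) as a single
generalized Sylvester matrix equation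
`A₁X + XC₁ + A₂XI₀ + A₃XD − F₁F₂ᵀ = 0` for `X = [Y, Λ]`. -/
theorem stmt_6 (n nT r : ℕ) (hn : 0 < n) (hnT : 0 < nT) (hr : 0 < r)
    (τ β : ℝ) (hτ : τ ≠ 0) (hβ : β ≠ 0)
    (M M1 N K : Matrix (Fin n) (Fin n) ℝ)
    (hMinv : IsUnit M.det) (hKsym : Kᵀ = K)
    (Y₁ : Matrix (Fin n) (Fin r) ℝ) (Y₂ : Matrix (Fin nT) (Fin r) ℝ)
    (Yhat : Matrix (Fin n) (Fin nT) ℝ) (hYhat : Yhat = Y₁ * Y₂ᵀ)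
    (C : Matrix (Fin nT) (Fin nT) ℝ)
    (hC : ∀ t s : Fin nT, C t s =
      if t = s then 1 else if (t : ℕ) = (s : ℕ) + 1 then -1 else 0)
    (Ct : Matrix (Fin nT) (Fin nT) ℝ) (hCt : Ct = (1 / τ) • C)
    (C₁ I₀ D : Matrix (Fin nT ⊕ Fin nT) (Fin nT ⊕ Fin nT) ℝ)
    (hC₁ : C₁ = fromBlocks Ctᵀ 0 0 Ct)
    (hI₀ : I₀ = fromBlocks 0 1 0 0)
    (hD : D = fromBlocks 0 0 (-((1 / β) • (1 : Matrix (Fin nT) (Fin nT) ℝ))) 0)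
    (A₁ A₂ A₃ : Matrix (Fin n) (Fin n) ℝ)
    (hA₁ : A₁ = M⁻¹ * K) (hA₂ : A₂ = M⁻¹ * M1) (hA₃ : A₃ = M⁻¹ * N * M⁻¹ * Nᵀ)
    (F₁ : Matrix (Fin n) (Fin r) ℝ) (hF₁ : F₁ = M⁻¹ * M1 * Y₁)
    (F₂ : Matrix (Fin nT ⊕ Fin nT) (Fin r) ℝ) (hF₂ : F₂ = fromRows 0 Y₂)
    (Y Λ : Matrix (Fin n) (Fin nT) ℝ)
    (X : Matrix (Fin n) (Fin nT ⊕ Fin nT) ℝ) (hX : X = fromCols Y Λ) :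
    (M⁻¹ * M1 * Y + M⁻¹ * Kᵀ * Λ + Λ * Ct - M⁻¹ * M1 * Yhat = 0 ∧
      M⁻¹ * K * Y + Y * Ctᵀ - (1 / β) • (M⁻¹ * N * M⁻¹ * Nᵀ * Λ) = 0)
    ↔
    A₁ * X + X * C₁ + A₂ * X * I₀ + A₃ * X * D - F₁ * F₂ᵀ = 0 := by
  subst hYhat hCt hC₁ hI₀ hD hA₁ hA₂ hA₃ hF₁ hF₂ hX
  rw [hKsym]
  rw [transpose_fromRows, Matrix.mul_fromCols, Matrix.mul_fromCols,
    Matrix.mul_fromCols, Matrix.mul_fromCols,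
    fromCols_mul_fromBlocks, fromCols_mul_fromBlocks, fromCols_mul_fromBlocks,
    fc_add, fc_add, fc_add, fc_sub, fc_zero]
  simp only [Matrix.mul_zero, Matrix.zero_mul, Matrix.mul_one, add_zero, zero_add,
    Matrix.mul_neg, Matrix.mul_smul, Matrix.mul_one, Matrix.transpose_zero, ← Matrix.mul_assoc]
  constructor <;> rintro ⟨h1, h2⟩ <;> exact ⟨Eq.trans (by abel) h2, Eq.trans (by abel) h1⟩
end

section
/- Let n, n_T, r be positive integers, τ ≠ 0 and β ≠ 0 real numbers, and M, M₁, N, K ∈ ℝ^{n×n} with M invertible (K not necessarily symmetric). Let Y₁ ∈ ℝ^{n×r}, Y₂ ∈ ℝ^{n_T×r}, Ŷ = Y₁Y₂ᵀ. Let C ∈ ℝ^{n_T×n_T} be the lower bidiagonal matrix with ones on the diagonal and −1 on the first subdiagonal, C̃ = (1/τ)C, and define the 2n_T × 2n_T block matrices C₁ = [[C̃ᵀ, 0], [0, C̃]], I₀ = [[0, I_{n_T}], [0, 0]], D = [[0, 0], [−(1/β)I_{n_T}, 0]], E₁ = [[I_{n_T}, 0], [0, 0]], E₂ = [[0, 0],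 [0, I_{n_T}]]. Define A₂ = M⁻¹M₁, A₃ = M⁻¹N M⁻¹Nᵀ, F₁ = M⁻¹M₁Y₁, and F₂ ∈ ℝ^{2n_T×r} whose first n_T rows are zero and whose last n_T rows equal Y₂. Then Y, Λ ∈ ℝ^{n×n_T} satisfy M⁻¹M₁Y + M⁻¹KᵀΛ + ΛC̃ − M⁻¹M₁Ŷ = 0 and M⁻¹KY + YC̃ᵀ − (1/β)M⁻¹NM⁻¹NᵀΛ = 0 if and only if X = [Y, Λ] ∈ ℝ^{n×2n_T} satisfies M⁻¹K X E₁ + M⁻¹Kᵀ X E₂ + XC₁ + A₂XI₀ + A₃XD − F₁F₂ᵀ = 0. -/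
open Matrix


private lemma fromColumns_add' {m n₁ n₂ : Type*} (A C : Matrix m n₁ ℝ) (B D : Matrix m n₂ ℝ) :
    Matrix.fromCols A B + Matrix.fromCols C D = Matrix.fromCols (A + C) (B + D) := by
  ext i (j | j) <;> simp [Matrix.fromCols]

private lemma fromColumns_sub' {m n₁ n₂ : Type*} (A C : Matrix m n₁ ℝ) (B D : Matrix m n₂ ℝ) :
    Matrix.fromCols A B - Matrix.fromCols C D = Matrix.fromCols (A - C) (B - D) := by
  ext i (j | j) <;> simp [Matrix.fromCols]

/-- Reformulation of the reduced KKT system with non-symmetric stiffness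
matrix `K` as the generalized Sylvester matrix equation
`M⁻¹K X E₁ + M⁻¹Kᵀ X E₂ + XC₁ + A₂XI₀ + A₃XD − F₁F₂ᵀ = 0` for `X = [Y, Λ]`. -/
theorem stmt_7 (n nT r : ℕ) (hn : 0 < n) (hnT : 0 < nT) (hr : 0 < r)
    (τ β : ℝ) (hτ : τ ≠ 0) (hβ : β ≠ 0)
    (M M1 N K : Matrix (Fin n) (Fin n) ℝ)
    (hMinv : IsUnit M.det)
    (Y₁ : Matrix (Fin n) (Fin r) ℝ) (Y₂ : Matrix (Fin nT) (Fin r) ℝ)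
    (Yhat : Matrix (Fin n) (Fin nT) ℝ) (hYhat : Yhat = Y₁ * Y₂ᵀ)
    (C : Matrix (Fin nT) (Fin nT) ℝ)
    (hC : ∀ t s : Fin nT, C t s =
      if t = s then 1 else if (t : ℕ) = (s : ℕ) + 1 then -1 else 0)
    (Ct : Matrix (Fin nT) (Fin nT) ℝ) (hCt : Ct = (1 / τ) • C)
    (C₁ I₀ D E₁ E₂ : Matrix (Fin nT ⊕ Fin nT) (Fin nT ⊕ Fin nT) ℝ)
    (hC₁ : C₁ = fromBlocks Ctᵀ 0 0 Ct)
    (hI₀ : I₀ = fromBlocks 0 1 0 0)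
    (hD : D = fromBlocks 0 0 (-((1 / β) • (1 : Matrix (Fin nT) (Fin nT) ℝ))) 0)
    (hE₁ : E₁ = fromBlocks 1 0 0 0)
    (hE₂ : E₂ = fromBlocks 0 0 0 1)
    (A₂ A₃ : Matrix (Fin n) (Fin n) ℝ)
    (hA₂ : A₂ = M⁻¹ * M1) (hA₃ : A₃ = M⁻¹ * N * M⁻¹ * Nᵀ)
    (F₁ : Matrix (Fin n) (Fin r) ℝ) (hF₁ : F₁ = M⁻¹ * M1 * Y₁)
    (F₂ : Matrix (Fin nT ⊕ Fin nT) (Fin r) ℝ) (hF₂ : F₂ = fromRows 0 Y₂)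
    (Y Λ : Matrix (Fin n) (Fin nT) ℝ)
    (X : Matrix (Fin n) (Fin nT ⊕ Fin nT) ℝ) (hX : X = fromCols Y Λ) :
    (M⁻¹ * M1 * Y + M⁻¹ * Kᵀ * Λ + Λ * Ct - M⁻¹ * M1 * Yhat = 0 ∧
      M⁻¹ * K * Y + Y * Ctᵀ - (1 / β) • (M⁻¹ * N * M⁻¹ * Nᵀ * Λ) = 0)
    ↔
    M⁻¹ * K * X * E₁ + M⁻¹ * Kᵀ * X * E₂ + X * C₁ + A₂ * X * I₀ + A₃ * X * D
      - F₁ * F₂ᵀ = 0 := by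
  subst hYhat hCt hC₁ hI₀ hD hE₁ hE₂ hA₂ hA₃ hF₁ hF₂ hX
  rw [Matrix.transpose_fromRows]
  simp only [Matrix.mul_fromCols, Matrix.fromCols_mul_fromBlocks,
    Matrix.mul_zero, Matrix.zero_mul, Matrix.mul_one, add_zero, zero_add,
    Matrix.mul_neg, Matrix.mul_smul, Matrix.transpose_zero,
    fromColumns_add', fromColumns_sub']
  rw [← Matrix.fromCols_zero, Matrix.fromCols_ext_iff]
  constructor
  · rintro ⟨h1, h2⟩
    constructor
    · rw [sub_zero, ← sub_eq_add_neg]; exact h2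
    · rw [Matrix.mul_assoc (M⁻¹ * M1) Y₁ Y₂ᵀ, ← h1]; abel
  · rintro ⟨h1, h2⟩
    constructor
    · rw [Matrix.mul_assoc (M⁻¹ * M1) Y₁ Y₂ᵀ] at h2; rw [← h2]; abel
    · rw [sub_zero, ← sub_eq_add_neg] at h1; exact h1
end
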